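/- Let η be a real number with 0 < η < 1 and let θ be a real number with e^{iθ} ≠ −1. Define H₀^q(θ) = (√η + e^{iθ}/√η)/(1 + e^{iθ}) and H₀^p(θ) = (e^{iθ}/√η + 1/√η)/(1/η + e^{iθ}). Then |H₀^q(θ) · H₀^p(θ)| = 1. -/

import Mathlib

/-- A feedback oscillator with a purely phase-sensitive (noiseless) in-loop
amplifier preserves the uncertainty product: `|H₀^q(θ) · H₀^p(θ)| = 1`. -/
theorem stmt_14 (η θ : ℝ) (hη0 : 0 < η) (hη1 : η < 1)
    (hθ : Complex.exp (θ * Complex.I) ≠ -1) :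
    ‖(((Real.sqrt η : ℂ) + Complex.exp (θ * Complex.I) / (Real.sqrt η : ℂ))
          / (1 + Complex.exp (θ * Complex.I)))
        * ((Complex.exp (θ * Complex.I) / (Real.sqrt η : ℂ) + 1 / (Real.sqrt η : ℂ))
          / (1 / (η : ℂ) + Complex.exp (θ * Complex.I)))‖ = 1 := by
  set z : ℂ := Complex.exp (θ * Complex.I) with hz
  have hzabs : ‖z‖ = 1 := by
    rw [hz]; exact Complex.norm_exp_ofReal_mul_I θ
  have hz0 : z ≠ 0 := Complex.exp_ne_zero _
  have hs : (0:ℝ) < Real.sqrt η := Real.sqrt_pos.mpr hη0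
  have hsC : ((Real.sqrt η : ℝ) : ℂ) ≠ 0 := by
    exact_mod_cast ne_of_gt hs
  have hηC : (η : ℂ) ≠ 0 := by exact_mod_cast ne_of_gt hη0
  have hsq : ((Real.sqrt η : ℝ) : ℂ) * ((Real.sqrt η : ℝ) : ℂ) = (η : ℂ) := by
    have : Real.sqrt η * Real.sqrt η = η := Real.mul_self_sqrt hη0.le
    exact_mod_cast this
  have h1z : (1 : ℂ) + z ≠ 0 := by
    intro h
    apply hθ
    have : z = -1 := by linear_combination h
    simpa [hz] using this
  have h1ηz : (1 : ℂ) + (η : ℂ) * z ≠ 0 := by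
    intro h
    have hzeq : (η : ℂ) * z = -1 := by linear_combination h
    have := congrArg (‖·‖) hzeq
    simp [map_mul, hzabs, Complex.norm_real, abs_of_pos hη0] at this
    linarith
  have hinv : (1 / (η : ℂ) + z) ≠ 0 := by
    intro h
    apply h1ηz
    field_simp at h
    linear_combination h
  have key : (((Real.sqrt η : ℂ) + z / (Real.sqrt η : ℂ)) / (1 + z))
      * ((z / (Real.sqrt η : ℂ) + 1 / (Real.sqrt η : ℂ)) / (1 / (η : ℂ) + z))
      = ((η : ℂ) + z) / (1 + (η : ℂ) * z) := by
    have h1ηz' : (1 : ℂ) + z * (η : ℂ) ≠ 0 := by rwa [mul_comm] at h1ηz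
    field_simp
    linear_combination (-(z + z ^ 2)) * hsq
  rw [key, norm_div]
  have habs : ‖(η : ℂ) + z‖ = ‖1 + (η : ℂ) * z‖ := by
    have : (η : ℂ) + z = z * (1 + (η : ℂ) * (starRingEnd ℂ z)) := by
      have hzz : z * starRingEnd ℂ z = 1 := by
        rw [Complex.mul_conj]
        norm_cast
        rw [Complex.normSq_eq_norm_sq, hzabs]; norm_num
      linear_combination (-(η : ℂ)) * hzz
    rw [this, norm_mul, hzabs, one_mul]
    calc ‖1 + (η : ℂ) * starRingEnd ℂ z‖
        = ‖starRingEnd ℂ (1 + (η : ℂ) * z)‖ := by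
          simp [map_add, map_mul, Complex.conj_ofReal]
      _ = ‖1 + (η : ℂ) * z‖ := Complex.norm_conj _
  rw [habs, div_self]
  exact norm_ne_zero_iff.mpr h1ηz
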